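/- Let n ≥ 4 be even and let v : ℤ/nℤ → ℝ² be the vertices of a closed polygon in general position, i.e., the vertices are pairwise distinct and no vertex lies on a closed edge segment of which it is not an endpoint. Then the number of unordered pairs {i, j} with j ∉ {i−1, i, i+1} (mod n) such that the closed segments e_i and e_j have nonempty intersection is at most n(n−3)/2 − 1. (This is the paper's Theorem 2, part 2: for a PL-virtual knot with an even number n of edges, c(K) ≤ n(n−3)/2 − 1.) -/

import Mathlib

noncomputable section

namespace CrossingBoundAux

def crossF (a b x : ℝ × ℝ) : ℝ :=
  (b.1 - a.1) * (x.2 - a.2) - (b.2 - a.2) * (x.1 - a.1)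

lemma crossF_comb (a b p q : ℝ × ℝ) (t : ℝ) :
    crossF a b ((1 - t) • p + t • q) = (1 - t) * crossF a b p + t * crossF a b q := by
  simp only [crossF, Prod.fst_add, Prod.snd_add, Prod.smul_fst, Prod.smul_snd, smul_eq_mul]
  ring

lemma crossF_self_left (a b : ℝ × ℝ) : crossF a b a = 0 := by simp [crossF]

lemma crossF_self_right (a b : ℝ × ℝ) : crossF a b b = 0 := by simp [crossF]; ring

lemma mem_segment_iff_param (p q x : ℝ × ℝ) :
    x ∈ segment ℝ p q ↔ ∃ t : ℝ, 0 ≤ t ∧ t ≤ 1 ∧ x = (1 - t) • p + t • q := by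
  rw [segment_eq_image]
  constructor
  · rintro ⟨t, ⟨h0, h1⟩, rfl⟩; exact ⟨t, h0, h1, rfl⟩
  · rintro ⟨t, h0, h1, rfl⟩; exact ⟨t, ⟨h0, h1⟩, rfl⟩

lemma exists_param (a b p : ℝ × ℝ) (hab : a ≠ b) (h : crossF a b p = 0) :
    ∃ c : ℝ, p = a + c • (b - a) := by
  by_cases h1 : b.1 - a.1 = 0
  · have h2 : b.2 - a.2 ≠ 0 := by
      intro h2
      exact hab (Prod.ext (by linarith) (by linarith)).symm
    refine ⟨(p.2 - a.2) / (b.2 - a.2), ?_⟩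
    have hp1 : p.1 = a.1 := by
      simp only [crossF, h1] at h
      rcases mul_eq_zero.1 (by linarith : (b.2 - a.2) * (p.1 - a.1) = 0) with h' | h'
      · exact absurd h' h2
      · linarith
    refine Prod.ext ?_ ?_
    · simp [Prod.fst_add, Prod.smul_fst, hp1, h1]
    · simp [Prod.snd_add, Prod.smul_snd]
      field_simp
      ring
  · refine ⟨(p.1 - a.1) / (b.1 - a.1), ?_⟩
    have h2 : (b.1 - a.1) * (p.2 - a.2) = (b.2 - a.2) * (p.1 - a.1) := by
      simp only [crossF] at h; linarith
    refine Prod.ext ?_ ?_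
    · simp [Prod.fst_add, Prod.smul_fst]
      field_simp
      ring
    · simp [Prod.snd_add, Prod.smul_snd]
      field_simp
      linear_combination h2

lemma mem_line_segment (a d : ℝ × ℝ) (c cp cq : ℝ) (h1 : cp ≤ c) (h2 : c ≤ cq) :
    a + c • d ∈ segment ℝ (a + cp • d) (a + cq • d) := by
  rcases eq_or_lt_of_le (h1.trans h2) with h | h
  · have hc : c = cp := le_antisymm (h ▸ h2) h1
    subst hc
    exact left_mem_segment ℝ _ _
  · refine (mem_segment_iff_param _ _ _).2 ⟨(c - cp)/(cq - cp), ?_, ?_, ?_⟩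
    · apply div_nonneg <;> linarith
    · rw [div_le_one (by linarith)]; linarith
    · have hne : cq - cp ≠ 0 := sub_ne_zero.mpr h.ne'
      have key : (1 - (c - cp)/(cq - cp)) * cp + ((c - cp)/(cq - cp)) * cq = c := by
        field_simp
        ring
      have e : (1 - (c - cp)/(cq - cp)) • (a + cp • d) + ((c - cp)/(cq - cp)) • (a + cq • d)
          = a + ((1 - (c - cp)/(cq - cp)) * cp + ((c - cp)/(cq - cp)) * cq) • d := by
        module
      rw [e, key]

lemma collinear_segment_cases (a b p q z : ℝ × ℝ) (hab : a ≠ b)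
    (hp : crossF a b p = 0) (hq : crossF a b q = 0)
    (hz1 : z ∈ segment ℝ a b) (hz2 : z ∈ segment ℝ p q) :
    p ∈ segment ℝ a b ∨ q ∈ segment ℝ a b ∨ a ∈ segment ℝ p q ∨ b ∈ segment ℝ p q := by
  obtain ⟨cp, rfl⟩ := exists_param a b p hab hp
  obtain ⟨cq, rfl⟩ := exists_param a b q hab hq
  obtain ⟨t, ht0, ht1, rfl⟩ := (mem_segment_iff_param a b z).1 hz1
  obtain ⟨s, hs0, hs1, hz⟩ := (mem_segment_iff_param _ _ _).1 hz2
  have hd : b - a ≠ 0 := sub_ne_zero.mpr (Ne.symm hab)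
  have ha0 : a + (0:ℝ) • (b - a) = a := by module
  have hb1 : a + (1:ℝ) • (b - a) = b := by module
  have hts : t = (1-s)*cp + s*cq := by
    have e1 : ((1 - t) • a + t • b : ℝ × ℝ) = a + t • (b - a) := by module
    have e2 : ((1 - s) • (a + cp • (b-a)) + s • (a + cq • (b-a)) : ℝ × ℝ)
        = a + ((1-s)*cp + s*cq) • (b - a) := by module
    rw [e1, e2] at hz
    have h3 := add_left_cancel hz
    have h4 : (t - ((1-s)*cp + s*cq)) • (b - a) = 0 := by
      rw [sub_smul, h3, sub_self]
    rcases smul_eq_zero.1 h4 with h | h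
    · linarith [sub_eq_zero.1 (by exact h)]
    · exact absurd h hd
  rcases le_total cp cq with hpq | hpq
  · have h3 : cp ≤ t := by nlinarith
    have h4 : t ≤ cq := by nlinarith
    rcases le_total 0 cp with h | h
    · left
      have := mem_line_segment a (b-a) cp 0 1 h (h3.trans ht1)
      rwa [ha0, hb1] at this
    · right; right; left
      have := mem_line_segment a (b-a) 0 cp cq h (ht0.trans h4)
      rwa [ha0] at this
  · have h3 : cq ≤ t := by nlinarith
    have h4 : t ≤ cp := by nlinarith
    rcases le_total 0 cq with h | h
    · right; left
      have := mem_line_segment a (b-a) cq 0 1 h (h3.trans ht1)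
      rwa [ha0, hb1] at this
    · right; right; left
      rw [segment_symm]
      have := mem_line_segment a (b-a) 0 cq cp h (ht0.trans h4)
      rwa [ha0] at this

end CrossingBoundAux

open CrossingBoundAux

/-- Theorem 2, part 2: for a closed polygon with an even number `n ≥ 4` of edges in the plane,
in general position (pairwise distinct vertices, and no vertex on a closed edge segment of
which it is not an endpoint), the number of unordered pairs of nonadjacent edges whose
segments intersect is at most `n(n−3)/2 − 1`. -/
theorem crossing_bound_of_even_polygon (n : ℕ) (hn : 4 ≤ n) (heven : Even n)
    (v : ZMod n → ℝ × ℝ) (hinj : Function.Injective v)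
    (hgen : ∀ k i : ZMod n, v k ∈ segment ℝ (v i) (v (i + 1)) → k = i ∨ k = i + 1) :
    {p : Sym2 (ZMod n) | ∃ i j : ZMod n,
        p = s(i, j) ∧ j ≠ i - 1 ∧ j ≠ i ∧ j ≠ i + 1 ∧
        (segment ℝ (v i) (v (i + 1)) ∩ segment ℝ (v j) (v (j + 1))).Nonempty}.ncard
      ≤ n * (n - 3) / 2 - 1 := by
  classical
  haveI : NeZero n := ⟨by omega⟩
  haveI : Fact (1 < n) := ⟨by omega⟩
  set S := {p : Sym2 (ZMod n) | ∃ i j : ZMod n,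
        p = s(i, j) ∧ j ≠ i - 1 ∧ j ≠ i ∧ j ≠ i + 1 ∧
        (segment ℝ (v i) (v (i + 1)) ∩ segment ℝ (v j) (v (j + 1))).Nonempty} with hSdef
  have hcastne : ∀ a b : ℕ, a < n → b < n → a ≠ b → (a : ZMod n) ≠ (b : ZMod n) := by
    intro a b ha hb hab h
    have := congrArg ZMod.val h
    rw [ZMod.val_cast_of_lt ha, ZMod.val_cast_of_lt hb] at this
    exact hab this
  have h10 : (1 : ZMod n) ≠ 0 := one_ne_zero
  have h20 : (2 : ZMod n) ≠ 0 := by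
    have := hcastne 2 0 (by omega) (by omega) (by omega)
    push_cast at this
    exact this
  have h30 : (3 : ZMod n) ≠ 0 := by
    have := hcastne 3 0 (by omega) (by omega) (by omega)
    push_cast at this
    exact this
  have h21 : (2 : ZMod n) ≠ 1 := by
    have := hcastne 2 1 (by omega) (by omega) (by omega)
    push_cast at this
    exact this
  have hm1 : ((n - 1 : ℕ) : ZMod n) = -1 := by
    have h : ((n - 1 : ℕ) : ZMod n) + 1 = 0 := by
      have h' : ((n - 1 + 1 : ℕ) : ZMod n) = 0 := by
        rw [show n - 1 + 1 = n by omega]; exact ZMod.natCast_self n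
      push_cast at h'
      exact h'
    linear_combination h
  have hneg : (-1 : ZMod n) + 1 = 0 := by ring
  have hndvd : ∀ x : ℕ, 0 < x → x < n → ¬ (n ∣ x) := by
    rintro x hx1 hx2 ⟨c, hc⟩
    rcases Nat.eq_zero_or_pos c with rfl | hcpos
    · omega
    · have := Nat.le_mul_of_pos_right n hcpos
      omega
  -- THE MAIN GEOMETRIC STEP: some nonadjacent pair does not cross
  have hmain : ∃ p : Sym2 (ZMod n),
      (∃ i j : ZMod n, p = s(i, j) ∧ j ≠ i - 1 ∧ j ≠ i ∧ j ≠ i + 1) ∧ p ∉ S := by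
    by_cases hB : ∀ j : ZMod n, j ≠ -1 → j ≠ 0 → j ≠ 1 →
        (segment ℝ (v 0) (v 1) ∩ segment ℝ (v j) (v (j + 1))).Nonempty
    · -- every edge nonadjacent to e₀ crosses e₀; then e₁ and e₋₁ do not cross
      have hv01 : v 0 ≠ v 1 := fun h => h10 (hinj h).symm
      have hfz0 : ∀ z ∈ segment ℝ (v 0) (v 1), crossF (v 0) (v 1) z = 0 := by
        intro z hz
        obtain ⟨t, _, _, rfl⟩ := (mem_segment_iff_param _ _ _).1 hz
        rw [crossF_comb, crossF_self_left, crossF_self_right]; ring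
      have hnot : ∀ w : ZMod n, w ≠ 0 → w ≠ 1 → v w ∉ segment ℝ (v 0) (v 1) := by
        intro w hw0 hw1 hmem
        have hg := hgen w 0
        rw [zero_add] at hg
        rcases hg hmem with h | h
        · exact hw0 h
        · exact hw1 h
      -- nonvanishing of the signed area on all other vertices
      have hne : ∀ k : ZMod n, k ≠ 0 → k ≠ 1 → crossF (v 0) (v 1) (v k) ≠ 0 := by
        intro k hk0 hk1 hfk
        obtain ⟨m, hmm1, hm0, hm1, hkm⟩ :
            ∃ m : ZMod n, m ≠ -1 ∧ m ≠ 0 ∧ m ≠ 1 ∧ (k = m ∨ k = m + 1) := by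
          by_cases hk2 : k = 2
          · exact ⟨2, fun h => h30 (by linear_combination h), h20, h21, Or.inl hk2⟩
          · exact ⟨k - 1, fun h => hk0 (by linear_combination h),
              fun h => hk1 (by linear_combination h),
              fun h => hk2 (by linear_combination h), Or.inr (by ring)⟩
        obtain ⟨z, hz0, hzm⟩ := hB m hmm1 hm0 hm1
        have hfz : crossF (v 0) (v 1) z = 0 := hfz0 z hz0
        rcases hkm with rfl | rfl
        · -- k = m
          by_cases hB2 : crossF (v 0) (v 1) (v (k + 1)) = 0
          · rcases collinear_segment_cases (v 0) (v 1) (v k) (v (k+1)) z hv01 hfk hB2 hz0 hzm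
              with h | h | h | h
            · exact hnot k hk0 hk1 h
            · exact hnot (k+1) (fun hh => hmm1 (by linear_combination hh))
                (fun hh => hk0 (by linear_combination hh)) h
            · rcases hgen 0 k h with h' | h'
              · exact hk0 h'.symm
              · exact hmm1 (by linear_combination -h')
            · rcases hgen 1 k h with h' | h'
              · exact hk1 h'.symm
              · exact hk0 (by linear_combination -h')
          · obtain ⟨s, hs0, hs1, hzeq⟩ := (mem_segment_iff_param _ _ _).1 hzm
            rw [hzeq, crossF_comb, hfk] at hfz
            have hsz : s * crossF (v 0) (v 1) (v (k+1)) = 0 := by linarith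
            rcases mul_eq_zero.1 hsz with h | h
            · rw [h] at hzeq
              simp only [sub_zero, one_smul, zero_smul, add_zero] at hzeq
              rw [hzeq] at hz0
              exact hnot k hk0 hk1 hz0
            · exact hB2 h
        · -- k = m + 1
          by_cases hB2 : crossF (v 0) (v 1) (v m) = 0
          · rcases collinear_segment_cases (v 0) (v 1) (v m) (v (m+1)) z hv01 hB2 hfk hz0 hzm
              with h | h | h | h
            · exact hnot m hm0 hm1 h
            · exact hnot (m+1) hk0 hk1 h
            · rcases hgen 0 m h with h' | h'
              · exact hm0 h'.symm
              · exact hmm1 (by linear_combination -h')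
            · rcases hgen 1 m h with h' | h'
              · exact hm1 h'.symm
              · exact hm0 (by linear_combination -h')
          · obtain ⟨s, hs0, hs1, hzeq⟩ := (mem_segment_iff_param _ _ _).1 hzm
            rw [hzeq, crossF_comb, hfk] at hfz
            have hsz : (1 - s) * crossF (v 0) (v 1) (v m) = 0 := by linarith
            rcases mul_eq_zero.1 hsz with h | h
            · have hs1' : s = 1 := by linarith
              rw [hs1'] at hzeq
              simp only [sub_self, zero_smul, one_smul, zero_add] at hzeq
              rw [hzeq] at hz0
              exact hnot (m+1) hk0 hk1 hz0
            · exact hB2 h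
      -- alternation of signs along the polygon
      have halt : ∀ j : ZMod n, j ≠ -1 → j ≠ 0 → j ≠ 1 →
          crossF (v 0) (v 1) (v j) * crossF (v 0) (v 1) (v (j+1)) < 0 := by
        intro j ha hb hc
        obtain ⟨z, hz0, hzj⟩ := hB j ha hb hc
        have hfz := hfz0 z hz0
        obtain ⟨s, hs0, hs1, hzeq⟩ := (mem_segment_iff_param _ _ _).1 hzj
        rw [hzeq, crossF_comb] at hfz
        have hA := hne j hb hc
        have hBn := hne (j+1) (fun h => ha (by linear_combination h))
          (fun h => hb (by linear_combination h))
        rcases hA.lt_or_gt with hA' | hA' <;> rcases hBn.lt_or_gt with hB' | hB'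
        · exfalso
          have e1 : (1 - s) * crossF (v 0) (v 1) (v j) ≤ 0 :=
            mul_nonpos_iff.mpr (Or.inl ⟨by linarith, hA'.le⟩)
          have e2 : s * crossF (v 0) (v 1) (v (j+1)) ≤ 0 :=
            mul_nonpos_iff.mpr (Or.inl ⟨hs0, hB'.le⟩)
          have e3 : (1 - s) * crossF (v 0) (v 1) (v j) = 0 := by linarith
          have e4 : s * crossF (v 0) (v 1) (v (j+1)) = 0 := by linarith
          rcases mul_eq_zero.1 e3 with h | h
          · rcases mul_eq_zero.1 e4 with h' | h'
            · linarith
            · exact hBn h'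
          · exact hA h
        · exact mul_neg_of_neg_of_pos hA' hB'
        · exact mul_neg_of_pos_of_neg hA' hB'
        · exfalso
          have e1 : 0 ≤ (1 - s) * crossF (v 0) (v 1) (v j) :=
            mul_nonneg (by linarith) hA'.le
          have e2 : 0 ≤ s * crossF (v 0) (v 1) (v (j+1)) :=
            mul_nonneg hs0 hB'.le
          have e3 : (1 - s) * crossF (v 0) (v 1) (v j) = 0 := by linarith
          have e4 : s * crossF (v 0) (v 1) (v (j+1)) = 0 := by linarith
          rcases mul_eq_zero.1 e3 with h | h
          · rcases mul_eq_zero.1 e4 with h' | h'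
            · linarith
            · exact hBn h'
          · exact hA h
      have hA2 := hne 2 h20 h21
      have key : ∀ k : ℕ, 2 ≤ k → k ≤ n - 1 →
          0 < (-1:ℝ)^k * (crossF (v 0) (v 1) (v 2) * crossF (v 0) (v 1) (v (k : ZMod n))) := by
        intro k hk2
        induction k, hk2 using Nat.le_induction with
        | base =>
          intro _
          have h22 : ((2:ℕ) : ZMod n) = (2 : ZMod n) := by push_cast; ring
          rw [h22, show ((-1:ℝ)^2) = 1 by norm_num, one_mul]
          exact mul_self_pos.mpr hA2
        | succ k hk ih =>
          intro hk1
          have ih' := ih (by omega)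
          have hcond1 : (k : ZMod n) ≠ -1 := by
            intro h
            have h0 : ((k+1 : ℕ) : ZMod n) = 0 := by push_cast; rw [h]; ring
            have hdvd := (ZMod.natCast_eq_zero_iff _ _).1 h0
            exact hndvd (k+1) (by omega) (by omega) hdvd
          have hcond2 : (k : ZMod n) ≠ 0 := by
            intro h
            have hdvd := (ZMod.natCast_eq_zero_iff _ _).1 h
            exact hndvd k (by omega) (by omega) hdvd
          have hcond3 : (k : ZMod n) ≠ 1 := by
            intro h
            have h1 : ((k:ℕ) : ZMod n) = ((1:ℕ) : ZMod n) := by push_cast; rw [h]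
            have h2 : k % n = 1 % n := (ZMod.natCast_eq_natCast_iff _ _ _).1 h1
            rw [Nat.mod_eq_of_lt (show k < n by omega), Nat.mod_eq_of_lt (show 1 < n by omega)] at h2
            omega
          have hstep := halt (k : ZMod n) hcond1 hcond2 hcond3
          have hcast : ((k+1 : ℕ) : ZMod n) = (k : ZMod n) + 1 := by push_cast; ring
          rw [hcast, pow_succ]
          have hAkne : crossF (v 0) (v 1) (v (k : ZMod n)) ≠ 0 := by
            intro h
            rw [h] at ih'
            simp at ih'
          nlinarith [mul_pos ih' (neg_pos.mpr hstep), mul_self_pos.mpr hAkne]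
      have hodd : Odd (n - 1) := by
        rcases heven with ⟨m, hm⟩
        exact ⟨m - 1, by omega⟩
      have hfin := key (n-1) (by omega) (le_refl _)
      rw [hodd.neg_one_pow, hm1] at hfin
      have hprod : crossF (v 0) (v 1) (v 2) * crossF (v 0) (v 1) (v (-1)) < 0 := by linarith
      -- the two edges adjacent to e₀ cannot cross each other
      have hdisj : ¬ (segment ℝ (v 1) (v 2) ∩ segment ℝ (v (-1)) (v 0)).Nonempty := by
        rintro ⟨z, hz1, hz2⟩
        obtain ⟨t, ht0, ht1, rfl⟩ := (mem_segment_iff_param _ _ _).1 hz1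
        obtain ⟨s, hs0, hs1, hzeq⟩ := (mem_segment_iff_param _ _ _).1 hz2
        have c1 : crossF (v 0) (v 1) ((1-t) • v 1 + t • v 2)
            = t * crossF (v 0) (v 1) (v 2) := by
          rw [crossF_comb, crossF_self_right]; ring
        have c2 : crossF (v 0) (v 1) ((1-t) • v 1 + t • v 2)
            = (1-s) * crossF (v 0) (v 1) (v (-1)) := by
          rw [hzeq, crossF_comb, crossF_self_left]; ring
        have heq := c1.symm.trans c2
        have ht00 : t = 0 := by
          by_contra htn
          have ht0' : 0 < t := lt_of_le_of_ne ht0 (Ne.symm htn)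
          have e : t * (crossF (v 0) (v 1) (v 2) * crossF (v 0) (v 1) (v (-1)))
              = (1 - s) * (crossF (v 0) (v 1) (v (-1)) * crossF (v 0) (v 1) (v (-1))) := by
            linear_combination crossF (v 0) (v 1) (v (-1)) * heq
          have l1 : t * (crossF (v 0) (v 1) (v 2) * crossF (v 0) (v 1) (v (-1))) < 0 :=
            mul_neg_of_pos_of_neg ht0' hprod
          have l2 : 0 ≤ (1 - s) * (crossF (v 0) (v 1) (v (-1)) * crossF (v 0) (v 1) (v (-1))) :=
            mul_nonneg (by linarith) (mul_self_nonneg _)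
          linarith
        have hzv1 : ((1-t) • v 1 + t • v 2 : ℝ × ℝ) = v 1 := by rw [ht00]; module
        rw [hzv1] at hz2
        have hg := hgen 1 (-1)
        rw [hneg] at hg
        rcases hg hz2 with h | h
        · exact h20 (by linear_combination h)
        · exact h10 h
      refine ⟨s(1, -1), ⟨1, -1, rfl, ?_, ?_, ?_⟩, ?_⟩
      · intro h; exact h10 (by linear_combination -h)
      · intro h; exact h20 (by linear_combination -h)
      · intro h; exact h30 (by linear_combination -h)
      · rw [hSdef]
        rintro ⟨i, j, hpe, h1, h2, h3, hint⟩
        rcases Sym2.eq_iff.1 hpe with ⟨rfl, rfl⟩ | ⟨rfl, rfl⟩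
        · rw [show (1:ZMod n)+1 = 2 by ring, hneg] at hint
          exact hdisj hint
        · rw [show (1:ZMod n)+1 = 2 by ring, hneg, Set.inter_comm] at hint
          exact hdisj hint
    · push_neg at hB
      obtain ⟨j₀, hj1, hj2, hj3, hj4⟩ := hB
      refine ⟨s(0, j₀), ⟨0, j₀, rfl, by rwa [zero_sub], hj2, by rwa [zero_add]⟩, ?_⟩
      rw [hSdef]
      rintro ⟨i, j, hpe, h1, h2, h3, hint⟩
      rcases Sym2.eq_iff.1 hpe with ⟨rfl, rfl⟩ | ⟨rfl, rfl⟩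
      · rw [zero_add] at hint
        rw [hj4] at hint
        exact Set.not_nonempty_empty hint
      · rw [zero_add, Set.inter_comm] at hint
        rw [hj4] at hint
        exact Set.not_nonempty_empty hint
  -- COUNTING
  obtain ⟨p, hpT, hpS⟩ := hmain
  set T := {p : Sym2 (ZMod n) | ∃ i j : ZMod n, p = s(i, j) ∧ j ≠ i - 1 ∧ j ≠ i ∧ j ≠ i + 1}
    with hTdef
  have hST : S ⊆ T := by
    rw [hSdef, hTdef]
    rintro q ⟨i, j, rfl, h1, h2, h3, _⟩
    exact ⟨i, j, rfl, h1, h2, h3⟩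
  have hpT' : p ∈ T := hpT
  have hss : S ⊂ T := (Set.ssubset_iff_subset_ne).mpr
    ⟨hST, fun h => hpS (by rw [h]; exact hpT')⟩
  have hlt : S.ncard < T.ncard := Set.ncard_lt_ncard hss (Set.toFinite _)
  set O : Finset (ZMod n × ZMod n) :=
    Finset.univ.filter (fun q => q.2 ≠ q.1 - 1 ∧ q.2 ≠ q.1 ∧ q.2 ≠ q.1 + 1) with hOdef
  set O1 := O.filter (fun q => q.1.val < q.2.val) with hO1def
  set O2 := O.filter (fun q => q.2.val < q.1.val) with hO2def
  have hTsub1 : T ⊆ (fun q : ZMod n × ZMod n => s(q.1, q.2)) '' ↑O1 := by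
    rintro q ⟨i, j, rfl, h1, h2, h3⟩
    rcases lt_trichotomy i.val j.val with h | h | h
    · refine ⟨(i, j), ?_, rfl⟩
      simp only [hO1def, hOdef, Finset.coe_filter, Finset.mem_filter, Finset.mem_univ,
        true_and, Set.mem_setOf_eq]
      exact ⟨⟨h1, h2, h3⟩, h⟩
    · exact absurd (ZMod.val_injective n h).symm h2
    · refine ⟨(j, i), ?_, Sym2.eq_swap⟩
      simp only [hO1def, hOdef, Finset.coe_filter, Finset.mem_filter, Finset.mem_univ,
        true_and, Set.mem_setOf_eq]
      refine ⟨⟨?_, fun hh => h2 hh.symm, ?_⟩, h⟩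
      · intro hh; exact h3 (by linear_combination -hh)
      · intro hh; exact h1 (by linear_combination -hh)
  have hTsub2 : T ⊆ (fun q : ZMod n × ZMod n => s(q.1, q.2)) '' ↑O2 := by
    rintro q ⟨i, j, rfl, h1, h2, h3⟩
    rcases lt_trichotomy i.val j.val with h | h | h
    · refine ⟨(j, i), ?_, Sym2.eq_swap⟩
      simp only [hO2def, hOdef, Finset.coe_filter, Finset.mem_filter, Finset.mem_univ,
        true_and, Set.mem_setOf_eq]
      refine ⟨⟨?_, fun hh => h2 hh.symm, ?_⟩, h⟩
      · intro hh; exact h3 (by linear_combination -hh)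
      · intro hh; exact h1 (by linear_combination -hh)
    · exact absurd (ZMod.val_injective n h).symm h2
    · refine ⟨(i, j), ?_, rfl⟩
      simp only [hO2def, hOdef, Finset.coe_filter, Finset.mem_filter, Finset.mem_univ,
        true_and, Set.mem_setOf_eq]
      exact ⟨⟨h1, h2, h3⟩, h⟩
  have hT1 : T.ncard ≤ O1.card := by
    calc T.ncard ≤ ((fun q : ZMod n × ZMod n => s(q.1, q.2)) '' ↑O1).ncard :=
          Set.ncard_le_ncard hTsub1 (Set.Finite.image _ O1.finite_toSet)
      _ ≤ (↑O1 : Set (ZMod n × ZMod n)).ncard := Set.ncard_image_le O1.finite_toSet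
      _ = O1.card := Set.ncard_coe_finset _
  have hT2 : T.ncard ≤ O2.card := by
    calc T.ncard ≤ ((fun q : ZMod n × ZMod n => s(q.1, q.2)) '' ↑O2).ncard :=
          Set.ncard_le_ncard hTsub2 (Set.Finite.image _ O2.finite_toSet)
      _ ≤ (↑O2 : Set (ZMod n × ZMod n)).ncard := Set.ncard_image_le O2.finite_toSet
      _ = O2.card := Set.ncard_coe_finset _
  have hdisjO : Disjoint O1 O2 := by
    rw [Finset.disjoint_left]
    intro q hq1 hq2
    rw [hO1def, Finset.mem_filter] at hq1
    rw [hO2def, Finset.mem_filter] at hq2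
    omega
  have hsum : O1.card + O2.card ≤ O.card := by
    rw [← Finset.card_union_of_disjoint hdisjO]
    apply Finset.card_le_card
    intro q hq
    rcases Finset.mem_union.1 hq with h | h
    · exact Finset.mem_of_mem_filter _ h
    · exact Finset.mem_of_mem_filter _ h
  have hOcard : O.card ≤ n * (n - 3) := by
    have hsub : O ⊆ Finset.univ.biUnion
        (fun i : ZMod n => {i} ×ˢ (Finset.univ \ {i - 1, i, i + 1})) := by
      intro q hq
      rw [hOdef, Finset.mem_filter] at hq
      refine Finset.mem_biUnion.2 ⟨q.1, Finset.mem_univ _, ?_⟩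
      rw [Finset.mem_product]
      refine ⟨Finset.mem_singleton_self _, ?_⟩
      simp only [Finset.mem_sdiff, Finset.mem_univ, true_and, Finset.mem_insert,
        Finset.mem_singleton]
      push_neg
      exact hq.2
    calc O.card ≤ _ := Finset.card_le_card hsub
      _ ≤ ∑ i : ZMod n, ({i} ×ˢ (Finset.univ \ {i - 1, i, i + 1})).card :=
          Finset.card_biUnion_le
      _ = ∑ _i : ZMod n, (n - 3) := by
          apply Finset.sum_congr rfl
          intro i _
          rw [Finset.card_product, Finset.card_singleton, one_mul,
            Finset.card_sdiff_of_subset (Finset.subset_univ _)]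
          have h3card : ({i - 1, i, i + 1} : Finset (ZMod n)).card = 3 := by
            rw [Finset.card_insert_of_notMem, Finset.card_insert_of_notMem,
              Finset.card_singleton]
            · simp only [Finset.mem_singleton]
              intro h; exact h10 (by linear_combination -h)
            · simp only [Finset.mem_insert, Finset.mem_singleton]
              push_neg
              constructor
              · intro h; exact h10 (by linear_combination -h)
              · intro h; exact h20 (by linear_combination -h)
          rw [h3card, Finset.card_univ, ZMod.card]
      _ = n * (n - 3) := by
          rw [Finset.sum_const, Finset.card_univ, ZMod.card, smul_eq_mul]
  have h2T : 2 * T.ncard ≤ n * (n - 3) := by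
    calc 2 * T.ncard = T.ncard + T.ncard := by ring
      _ ≤ O1.card + O2.card := Nat.add_le_add hT1 hT2
      _ ≤ O.card := hsum
      _ ≤ n * (n - 3) := hOcard
  obtain ⟨m, hm⟩ : ∃ m, n * (n - 3) = m := ⟨_, rfl⟩
  rw [hm] at h2T
  rw [hm]
  omega
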